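/- Let A ⊂ P^m (m ≥ 1, over ℂ) be a set of m+2 points in linearly general position. Then A imposes m+2 independent conditions on the space of quadratic forms ℂ[z_0,…,z_m]_2. -/

import Mathlib

open MvPolynomial Function

/-- Complex projective `n`-space, as the projectivization of `ℂ^{n+1}`. -/
abbrev Pn (n : ℕ) := Projectivization ℂ (Fin (n + 1) → ℂ)

/-- The linear span (as a vector subspace) of a set of projective points. -/
def pspan {V : Type*} [AddCommGroup V] [Module ℂ V] (E : Set (Projectivization ℂ V)) :
    Submodule ℂ V :=
  Submodule.span ℂ (Projectivization.rep '' E)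

/-- `E` minimally spans `q`: `q` lies in the span of `E` but in the span of no proper subset. -/
def MinimallySpans {V : Type*} [AddCommGroup V] [Module ℂ V]
    (E : Set (Projectivization ℂ V)) (q : Projectivization ℂ V) : Prop :=
  q.rep ∈ pspan E ∧ ∀ E' ⊂ E, q.rep ∉ pspan E'

/-- `E ⊂ P^n` imposes `|E|` independent conditions on degree-`t` forms:
the evaluation map from `ℂ[z_0,…,z_n]_t` to `ℂ^E` is surjective. -/
def ImposesIndep (n t : ℕ) (E : Set (Pn n)) : Prop :=
  Surjective (fun (g : homogeneousSubmodule (Fin (n + 1)) ℂ t) (p : E) =>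
    eval (Projectivization.rep (p : Pn n)) (g : MvPolynomial (Fin (n + 1)) ℂ))

/-- The `d`-th power of the linear form with coefficient vector `v`. -/
noncomputable def linPow (n d : ℕ) (v : Fin (n + 1) → ℂ) : MvPolynomial (Fin (n + 1)) ℂ :=
  (∑ i, C (v i) * X i) ^ d

/-- The span of the image under the degree-`d` Veronese embedding of a set `S ⊂ P^n`,
as a subspace of the polynomial ring. -/
noncomputable def veroneseSpan (n d : ℕ) (S : Set (Pn n)) : Submodule ℂ (MvPolynomial (Fin (n + 1)) ℂ) :=
  Submodule.span ℂ ((fun p : Pn n => linPow n d (Projectivization.rep p)) '' S)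

/-- `ν_d(S)` minimally spans the point `q` of `P^r = P(ℂ[z_0,…,z_n]_d)`. -/
def MinSpansVer (n d : ℕ) (S : Set (Pn n))
    (q : Projectivization ℂ (homogeneousSubmodule (Fin (n + 1)) ℂ d)) : Prop :=
  (Projectivization.rep q).1 ∈ veroneseSpan n d S ∧
    ∀ S' ⊂ S, (Projectivization.rep q).1 ∉ veroneseSpan n d S'

/-- `S ⊂ P^m` is in linearly general position: every subset of cardinality at most `m + 1`
is linearly independent. -/
def LGP (m : ℕ) (S : Set (Pn m)) : Prop :=
  ∀ B ⊆ S, B.Finite → B.ncard ≤ m + 1 →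
    LinearIndependent ℂ (fun p : B => Projectivization.rep (p : Pn m))

/-- The evaluation linear map from degree-`t` forms to `ℂ^E`. -/
noncomputable def evalLM (n t : ℕ) (E : Set (Pn n)) :
    homogeneousSubmodule (Fin (n + 1)) ℂ t →ₗ[ℂ] (E → ℂ) where
  toFun g p := eval (Projectivization.rep (p : Pn n)) g.1
  map_add' g₁ g₂ := by funext p; simp
  map_smul' c g := by funext p; simp [MvPolynomial.smul_eval]

/-! Auxiliary lemmas -/

noncomputable def linOf (m : ℕ) (φ : (Fin (m + 1) → ℂ) →ₗ[ℂ] ℂ) :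
    MvPolynomial (Fin (m + 1)) ℂ :=
  ∑ k, C (φ fun j => if k = j then 1 else 0) * X k

lemma eval_linOf (m : ℕ) (φ : (Fin (m + 1) → ℂ) →ₗ[ℂ] ℂ) (v : Fin (m + 1) → ℂ) :
    eval v (linOf m φ) = φ v := by
  rw [linOf, LinearMap.pi_apply_eq_sum_univ φ v]
  simp [mul_comm]

lemma linOf_homog (m : ℕ) (φ : (Fin (m + 1) → ℂ) →ₗ[ℂ] ℂ) :
    (linOf m φ).IsHomogeneous 1 := by
  apply IsHomogeneous.sum
  intro k _
  exact (isHomogeneous_X ℂ k).C_mul _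

lemma exists_quadric (m : ℕ) (hm : 1 ≤ m) (A : Set (Pn m)) (hA : A.Finite)
    (hcard : A.ncard = m + 2) (hlgp : LGP m A) (p : Pn m) (hp : p ∈ A) :
    ∃ Q : MvPolynomial (Fin (m + 1)) ℂ, Q.IsHomogeneous 2 ∧
      eval p.rep Q ≠ 0 ∧ ∀ q ∈ A, q ≠ p → eval (Projectivization.rep q) Q = 0 := by
  classical
  set B : Set (Pn m) := A \ {p} with hBdef
  have hBsub : B ⊆ A := Set.diff_subset
  have hBfin : B.Finite := hA.diff
  have hBcard : B.ncard = m + 1 := by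
    rw [Set.ncard_diff_singleton_of_mem hp, hcard]
    omega
  have li := hlgp B hBsub hBfin (le_of_eq hBcard)
  haveI : Fintype B := hBfin.fintype
  haveI : Nonempty B := by
    rw [Set.nonempty_coe_sort, ← Set.ncard_pos hBfin, hBcard]; omega
  have card_eq : Fintype.card B = Module.finrank ℂ (Fin (m + 1) → ℂ) := by
    rw [Module.finrank_fin_fun, ← Nat.card_eq_fintype_card, Nat.card_coe_set_eq, hBcard]
  set b := basisOfLinearIndependentOfCardEqFinrank li card_eq with hbdef
  have hb : ⇑b = fun q : B => Projectivization.rep (q : Pn m) :=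
    coe_basisOfLinearIndependentOfCardEqFinrank li card_eq
  set c := b.repr p.rep with hcdef
  have hij : ∃ i j : B, i ≠ j ∧ c i ≠ 0 ∧ c j ≠ 0 := by
    by_contra hcon
    push_neg at hcon
    by_cases hz : ∀ i, c i = 0
    · have : p.rep = 0 := by
        have hsum := b.sum_repr p.rep
        rw [← hsum]
        simp [← hcdef, hz]
      exact p.rep_nonzero this
    · push_neg at hz
      obtain ⟨i, hi⟩ := hz
      have hrep : p.rep = c i • Projectivization.rep (i : Pn m) := by
        have hsum := b.sum_repr p.rep
        rw [← hsum, Finset.sum_eq_single i]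
        · rw [hb]
        · intro j _ hj
          rw [hcon i j (Ne.symm hj) hi]
          simp
        · simp
      have hpi : p ≠ (i : Pn m) := by
        have := i.2.2
        simp only [Set.mem_singleton_iff] at this
        exact fun h => this h.symm
      set D : Set (Pn m) := {p, (i : Pn m)} with hDdef
      have hD := hlgp D (by
          intro x hx
          rcases hx with h | h
          · exact h ▸ hp
          · exact h ▸ i.2.1)
        (Set.toFinite D) (by rw [Set.ncard_pair hpi]; omega)
      have h2 : LinearIndependent ℂ ![p.rep, Projectivization.rep (i : Pn m)] := by
        have hne : (⟨p, Or.inl rfl⟩ : D) ≠ ⟨(i : Pn m), Or.inr rfl⟩ :=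
          fun h => hpi (congrArg Subtype.val h)
        have hinj : Function.Injective
            (![⟨p, Or.inl rfl⟩, ⟨(i : Pn m), Or.inr rfl⟩] : Fin 2 → D) := by
          intro a b hab
          fin_cases a <;> fin_cases b
          · rfl
          · exact absurd hab hne
          · exact absurd hab.symm hne
          · rfl
        have := hD.comp _ hinj
        convert this using 1
        funext t
        fin_cases t <;> rfl
      rw [LinearIndependent.pair_iff] at h2
      have := (h2 1 (-(c i)) (by rw [hrep]; module)).1
      exact one_ne_zero this
  obtain ⟨i, j, hij, hci, hcj⟩ := hij
  refine ⟨linOf m (b.coord i) * linOf m (b.coord j), ?_, ?_, ?_⟩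
  · exact (linOf_homog m _).mul (linOf_homog m _)
  · rw [map_mul, eval_linOf, eval_linOf, Module.Basis.coord_apply, Module.Basis.coord_apply]
    exact mul_ne_zero hci hcj
  · intro q hq hqp
    have hqB : q ∈ B := ⟨hq, by simpa using hqp⟩
    have hq' : Projectivization.rep q = b ⟨q, hqB⟩ := by rw [hb]
    rw [map_mul, eval_linOf, eval_linOf, hq', Module.Basis.coord_apply, Module.Basis.coord_apply,
      b.repr_self, Finsupp.single_apply, Finsupp.single_apply]
    rcases eq_or_ne (⟨q, hqB⟩ : B) i with h | h
    · have hj : (⟨q, hqB⟩ : B) ≠ j := by rw [h]; exact hij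
      rw [if_neg hj]; ring
    · rw [if_neg h]; ring

/-- `m + 2` points of `P^m` in linearly general position impose independent
conditions on quadrics. -/
theorem stmt_5' (m : ℕ) (hm : 1 ≤ m) (A : Set (Pn m)) (hA : A.Finite)
    (hcard : A.ncard = m + 2) (hlgp : LGP m A) :
    Surjective (fun (g : homogeneousSubmodule (Fin (m + 1)) ℂ 2) (p : A) =>
      eval (Projectivization.rep (p : Pn m)) (g : MvPolynomial (Fin (m + 1)) ℂ)) := by
  classical
  haveI : Fintype A := hA.fintype
  have key : ∀ p : A, ∃ Q : MvPolynomial (Fin (m + 1)) ℂ, Q.IsHomogeneous 2 ∧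
      eval (Projectivization.rep (p : Pn m)) Q ≠ 0 ∧
      ∀ q ∈ A, q ≠ (p : Pn m) → eval (Projectivization.rep q) Q = 0 :=
    fun p => exists_quadric m hm A hA hcard hlgp p.1 p.2
  choose Q hQ2 hQne hQ0 using key
  intro f
  refine ⟨∑ p : A, (f p / eval (Projectivization.rep (p : Pn m)) (Q p)) •
    (⟨Q p, (mem_homogeneousSubmodule _ _).2 (hQ2 p)⟩ :
      homogeneousSubmodule (Fin (m + 1)) ℂ 2), ?_⟩
  funext q
  simp only [AddSubmonoidClass.coe_finset_sum, Submodule.coe_smul, map_sum,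
    MvPolynomial.smul_eval]
  rw [Finset.sum_eq_single q]
  · rw [div_mul_cancel₀ _ (hQne q)]
  · intro p _ hpq
    rw [hQ0 p q.1 q.2 (fun h => hpq (Subtype.ext h).symm)]
    ring
  · simp


theorem stmt_5 (m : ℕ) (hm : 1 ≤ m) (A : Set (Pn m)) (hA : A.Finite)
    (hcard : A.ncard = m + 2) (hlgp : LGP m A) :
    ImposesIndep m 2 A :=
  stmt_5' m hm A hA hcard hlgp
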